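/- For any constants $p,q,r>0$ and $b>0$, the function $f(x,y,z) = e^{qy}/((x-b)^p x^r z^r)$ is strictly convex on the domain $D_f = (b,\infty)\times\mathbb{R}\times(0,\infty)$. -/
import Mathlib


open Set Real

/-- For constants `p, q, r, b > 0`, the function
`f(x,y,z) = e^{qy} / ((x-b)^p x^r z^r)` is strictly convex on `(b,∞) × ℝ × (0,∞)`. -/
theorem stmt4 (p q r b : ℝ) (hp : 0 < p) (hq : 0 < q) (hr : 0 < r) (hb : 0 < b) :
    StrictConvexOn ℝ ((Ioi b) ×ˢ ((univ : Set ℝ) ×ˢ Ioi (0:ℝ)))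
      (fun w : ℝ × ℝ × ℝ =>
        Real.exp (q * w.2.1) / ((w.1 - b) ^ p * w.1 ^ r * w.2.2 ^ r)) := by
  have hs : Convex ℝ ((Ioi b) ×ˢ ((univ : Set ℝ) ×ˢ Ioi (0:ℝ))) :=
    (convex_Ioi b).prod (convex_univ.prod (convex_Ioi 0))
  refine ⟨hs, ?_⟩
  rintro ⟨x₁, y₁, z₁⟩ ⟨hx₁, -, hz₁⟩ ⟨x₂, y₂, z₂⟩ ⟨hx₂, -, hz₂⟩ hne a c ha hc hac
  simp only [mem_Ioi] at hx₁ hz₁ hx₂ hz₂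
  simp only [Prod.smul_mk, Prod.mk_add_mk, smul_eq_mul]
  set X := a * x₁ + c * x₂ with hX
  set Y := a * y₁ + c * y₂ with hY
  set Z := a * z₁ + c * z₂ with hZ
  have hXb : b < X := by
    have : b = a * b + c * b := by rw [← add_mul, hac]; ring
    rw [this]
    rcases eq_or_ne x₁ x₂ with h | h
    · subst h; nlinarith
    · nlinarith [mul_lt_mul_of_pos_left hx₁ ha, mul_lt_mul_of_pos_left hx₂ hc]
  have hXpos : 0 < X := by nlinarith
  have hZpos : 0 < Z := by nlinarith
  have hx₁0 : (0:ℝ) < x₁ := lt_trans hb hx₁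
  have hx₂0 : (0:ℝ) < x₂ := lt_trans hb hx₂
  -- rewrite f as exp of g
  have key : ∀ x y z : ℝ, b < x → 0 < z →
      Real.exp (q * y) / ((x - b) ^ p * x ^ r * z ^ r)
        = Real.exp (q * y - p * Real.log (x - b) - r * Real.log x - r * Real.log z) := by
    intro x y z hx hz
    have h1 : (0:ℝ) < x - b := by linarith
    have h2 : (0:ℝ) < x := lt_trans hb hx
    rw [Real.rpow_def_of_pos h1, Real.rpow_def_of_pos h2, Real.rpow_def_of_pos hz,
      ← Real.exp_add, ← Real.exp_add, ← Real.exp_sub]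
    ring_nf
  rw [key x₁ y₁ z₁ hx₁ hz₁, key x₂ y₂ z₂ hx₂ hz₂, key X Y Z hXb hZpos]
  set g₁ := q * y₁ - p * Real.log (x₁ - b) - r * Real.log x₁ - r * Real.log z₁ with hg₁
  set g₂ := q * y₂ - p * Real.log (x₂ - b) - r * Real.log x₂ - r * Real.log z₂ with hg₂
  -- concavity of log
  have hcc := strictConcaveOn_log_Ioi.concaveOn
  have logle : ∀ u v : ℝ, 0 < u → 0 < v →
      a * Real.log u + c * Real.log v ≤ Real.log (a * u + c * v) := by
    intro u v hu hv
    have := hcc.2 (mem_Ioi.mpr hu) (mem_Ioi.mpr hv) ha.le hc.le hac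
    simpa using this
  have loglt : ∀ u v : ℝ, 0 < u → 0 < v → u ≠ v →
      a * Real.log u + c * Real.log v < Real.log (a * u + c * v) := by
    intro u v hu hv huv
    have := strictConcaveOn_log_Ioi.2 (mem_Ioi.mpr hu) (mem_Ioi.mpr hv) huv ha hc hac
    simpa using this
  have hXbeq : X - b = a * (x₁ - b) + c * (x₂ - b) := by rw [hX]; linear_combination b * hac
  rcases eq_or_ne (x₁, z₁) (x₂, z₂) with heq | hneq
  · -- x,z equal, y differs: use strict convexity of exp
    injection heq with hx hz
    have hy : y₁ ≠ y₂ := by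
      intro h; exact hne (by simp [hx, hz, h])
    have hg : g₁ ≠ g₂ := by
      rw [hg₁, hg₂, hx, hz]
      intro h
      have : q * y₁ = q * y₂ := by linarith
      exact hy (mul_left_cancel₀ (ne_of_gt hq) this)
    have hexp := strictConvexOn_exp.2 (mem_univ g₁) (mem_univ g₂) hg ha hc hac
    simp only [smul_eq_mul] at hexp
    have harg : q * Y - p * Real.log (X - b) - r * Real.log X - r * Real.log Z
        ≤ a * g₁ + c * g₂ := by
      have hXx : X = x₁ := by rw [hX, hx]; linear_combination x₂ * hac
      have hZz : Z = z₁ := by rw [hZ, hz]; linear_combination z₂ * hac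
      rw [hXx, hZz, hg₁, hg₂, hx, hz, hY]
      apply le_of_eq
      linear_combination (p * Real.log (x₂ - b) + r * Real.log x₂ + r * Real.log z₂) * hac
    calc Real.exp (q * Y - p * Real.log (X - b) - r * Real.log X - r * Real.log Z)
        ≤ Real.exp (a * g₁ + c * g₂) := Real.exp_le_exp.mpr harg
      _ < a * Real.exp g₁ + c * Real.exp g₂ := hexp
  · -- x or z differs: strict inequality in g
    have harg : q * Y - p * Real.log (X - b) - r * Real.log X - r * Real.log Z
        < a * g₁ + c * g₂ := by
      have hL3 : a * Real.log z₁ + c * Real.log z₂ ≤ Real.log Z := logle z₁ z₂ hz₁ hz₂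
      have hL2 : a * Real.log x₁ + c * Real.log x₂ ≤ Real.log X := logle x₁ x₂ hx₁0 hx₂0
      have hL1 : a * Real.log (x₁ - b) + c * Real.log (x₂ - b) ≤ Real.log (X - b) := by
        rw [hXbeq]
        exact logle _ _ (by linarith) (by linarith)
      have hor : x₁ ≠ x₂ ∨ z₁ ≠ z₂ := by
        by_contra h
        push_neg at h
        exact hneq (by simp [h.1, h.2])
      have h1 := mul_le_mul_of_nonneg_left hL1 hp.le
      have h2 := mul_le_mul_of_nonneg_left hL2 hr.le
      have h3 := mul_le_mul_of_nonneg_left hL3 hr.le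
      rw [hg₁, hg₂, hY]
      rcases hor with hx | hz
      · have hL1' : a * Real.log (x₁ - b) + c * Real.log (x₂ - b) < Real.log (X - b) := by
          rw [hXbeq]
          exact loglt _ _ (by linarith) (by linarith) (by intro h; exact hx (by linarith))
        have h1' := mul_lt_mul_of_pos_left hL1' hp
        linarith
      · have hL3' : a * Real.log z₁ + c * Real.log z₂ < Real.log Z := loglt z₁ z₂ hz₁ hz₂ hz
        have h3' := mul_lt_mul_of_pos_left hL3' hr
        linarith
    calc Real.exp (q * Y - p * Real.log (X - b) - r * Real.log X - r * Real.log Z)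
        < Real.exp (a * g₁ + c * g₂) := Real.exp_lt_exp.mpr harg
      _ ≤ a * Real.exp g₁ + c * Real.exp g₂ := by
          have := convexOn_exp.2 (mem_univ g₁) (mem_univ g₂) ha.le hc.le hac
          simpa using this
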